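/- Let m ≥ 1, 0 < m̲ ≤ m, and 0 < κ̲ < κ. Suppose c : ℝ^N → ℝ is continuously differentiable, convex, nonnegative, and satisfies κ̲‖ν‖^{m̲} ≤ ‖∇c(ν)‖ for all ν, and suppose b : ℝ^N → ℝ^N is continuously differentiable with ‖∇b(ν)‖ ≤ C for all ν. Then there exists a constant C' > 0 such that any maximizer ν* of the map ν ↦ b(ν)·z − c(ν) satisfies ‖ν*‖ ≤ C'(1 + ‖z‖^{1/m̲}). -/

import Mathlib

open scoped RealInnerProductSpace

theorem stmt0 (N : ℕ) (hN : 1 ≤ N) (m mlow κlow κ C : ℝ)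
    (hm : 1 ≤ m) (hmlow : 0 < mlow) (hmlowm : mlow ≤ m)
    (hκlow : 0 < κlow) (hκ : κlow < κ)
    (c : EuclideanSpace ℝ (Fin N) → ℝ)
    (b : EuclideanSpace ℝ (Fin N) → EuclideanSpace ℝ (Fin N))
    (hc1 : ContDiff ℝ 1 c) (hcconv : ConvexOn ℝ Set.univ c)
    (hcpos : ∀ ν, 0 ≤ c ν)
    (hgrad : ∀ ν, κlow * ‖ν‖ ^ mlow ≤ ‖gradient c ν‖)
    (hb1 : ContDiff ℝ 1 b) (hbder : ∀ ν, ‖fderiv ℝ b ν‖ ≤ C) :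
    ∃ C' > 0, ∀ z νstar : EuclideanSpace ℝ (Fin N),
      IsMaxOn (fun ν => ⟪b ν, z⟫ - c ν) Set.univ νstar →
      ‖νstar‖ ≤ C' * (1 + ‖z‖ ^ (1 / mlow)) := by
  have hC : 0 ≤ C := le_trans (norm_nonneg _) (hbder 0)
  set D : ℝ := (C / κlow) ^ (1 / mlow) with hD
  have hDnn : 0 ≤ D := Real.rpow_nonneg (div_nonneg hC hκlow.le) _
  refine ⟨max 1 D, lt_of_lt_of_le one_pos (le_max_left _ _), ?_⟩
  intro z νstar hmax
  -- the maximizer is a critical point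
  have hlocal : IsLocalMax (fun ν => ⟪b ν, z⟫ - c ν) νstar := by
    apply hmax.filter_mono
    simp [Filter.le_principal_iff, Filter.univ_mem]
  set L : EuclideanSpace ℝ (Fin N) →L[ℝ] ℝ := innerSL ℝ z with hL
  have hbd : HasFDerivAt b (fderiv ℝ b νstar) νstar :=
    ((hb1.differentiable one_ne_zero) νstar).hasFDerivAt
  have hcd : HasFDerivAt c (fderiv ℝ c νstar) νstar :=
    ((hc1.differentiable one_ne_zero) νstar).hasFDerivAt
  have hg : HasFDerivAt (fun ν => ⟪b ν, z⟫)
      ((L.comp (fderiv ℝ b νstar))) νstar := by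
    have := (L.hasFDerivAt (x := b νstar)).comp νstar hbd
    refine this.congr_of_eventuallyEq (Filter.Eventually.of_forall fun ν => ?_)
    exact real_inner_comm z (b ν)
  have hf : HasFDerivAt (fun ν => ⟪b ν, z⟫ - c ν)
      (L.comp (fderiv ℝ b νstar) - fderiv ℝ c νstar) νstar := hg.sub hcd
  have hzero := hlocal.hasFDerivAt_eq_zero hf
  have hceq : fderiv ℝ c νstar = L.comp (fderiv ℝ b νstar) := by
    have := sub_eq_zero.mp hzero
    exact this.symm
  -- bound the gradient
  have hnormgrad : ‖gradient c νstar‖ = ‖fderiv ℝ c νstar‖ := by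
    rw [gradient, LinearIsometryEquiv.norm_map]
  have hbound : ‖gradient c νstar‖ ≤ C * ‖z‖ := by
    rw [hnormgrad, hceq]
    calc ‖L.comp (fderiv ℝ b νstar)‖ ≤ ‖L‖ * ‖fderiv ℝ b νstar‖ :=
          ContinuousLinearMap.opNorm_comp_le _ _
      _ ≤ ‖z‖ * C := by
          apply mul_le_mul _ (hbder νstar) (norm_nonneg _) (norm_nonneg _)
          rw [hL, innerSL_apply_norm]
      _ = C * ‖z‖ := mul_comm _ _
  have hkey : κlow * ‖νstar‖ ^ mlow ≤ C * ‖z‖ := le_trans (hgrad νstar) hbound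
  have h1 : ‖νstar‖ ^ mlow ≤ (C / κlow) * ‖z‖ := by
    rw [div_mul_eq_mul_div, le_div_iff₀ hκlow, mul_comm]
    linarith [hkey]
  have hmne : mlow ≠ 0 := hmlow.ne'
  have h2 : ‖νstar‖ ≤ ((C / κlow) * ‖z‖) ^ (1 / mlow) := by
    have := Real.rpow_le_rpow (Real.rpow_nonneg (norm_nonneg νstar) mlow) h1
      (by positivity : (0:ℝ) ≤ 1 / mlow)
    rwa [← Real.rpow_mul (norm_nonneg νstar),
      mul_one_div, div_self hmne, Real.rpow_one] at this
  have h3 : ((C / κlow) * ‖z‖) ^ (1 / mlow) = D * ‖z‖ ^ (1 / mlow) := by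
    rw [Real.mul_rpow (div_nonneg hC hκlow.le) (norm_nonneg z)]
  calc ‖νstar‖ ≤ D * ‖z‖ ^ (1 / mlow) := by rw [← h3]; exact h2
    _ ≤ max 1 D * (1 + ‖z‖ ^ (1 / mlow)) := by
        have hz : (0:ℝ) ≤ ‖z‖ ^ (1 / mlow) := Real.rpow_nonneg (norm_nonneg z) _
        have : D ≤ max 1 D := le_max_right _ _
        nlinarith [le_max_left 1 D]
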